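/- Suppose f : [p₀,0] → ℝ is twice continuously differentiable with λ²·(a³f')' = μ·a·f on [p₀,0], and h : [p₀,0] → ℝ is twice continuously differentiable with λ²·(a³h')' − μ·a·h = a·f on [p₀,0] and h(p₀) = h'(p₀) = 0. Then a(0)³·(f(0)·h'(0) − f'(0)·h(0)) = (1/λ²)·∫_{p₀}^0 a(p)·f(p)² dp. -/

import Mathlib

open Real Set

/-- Derivative within the interval [p₀, 0]. -/
noncomputable def dI (p₀ : ℝ) (f : ℝ → ℝ) : ℝ → ℝ :=
  derivWithin f (Set.Icc p₀ 0)

/-- If f solves λ²·(a³f')' = μ·a·f on [p₀,0], and h solves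
λ²·(a³h')' − μ·a·h = a·f with h(p₀) = h'(p₀) = 0, then
a(0)³·(f(0)·h'(0) − f'(0)·h(0)) = (1/λ²)·∫_{p₀}^0 a·f². -/
theorem mu_derivative_wronskian_identity
    (p₀ lam μ : ℝ) (hp₀ : p₀ < 0) (hlam : 0 < lam)
    (a : ℝ → ℝ) (ha : ContDiffOn ℝ 1 a (Icc p₀ 0))
    (hapos : ∀ p ∈ Icc p₀ 0, 0 < a p)
    (f h : ℝ → ℝ)
    (hf : ContDiffOn ℝ 2 f (Icc p₀ 0)) (hh : ContDiffOn ℝ 2 h (Icc p₀ 0))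
    (hfe : ∀ p ∈ Icc p₀ 0,
      lam ^ 2 * dI p₀ (fun q => a q ^ 3 * dI p₀ f q) p = μ * a p * f p)
    (hhe : ∀ p ∈ Icc p₀ 0,
      lam ^ 2 * dI p₀ (fun q => a q ^ 3 * dI p₀ h q) p - μ * a p * h p
        = a p * f p)
    (hh0 : h p₀ = 0) (hh'0 : dI p₀ h p₀ = 0) :
    a 0 ^ 3 * (f 0 * dI p₀ h 0 - dI p₀ f 0 * h 0)
      = (1 / lam ^ 2) * ∫ p in p₀..(0:ℝ), a p * f p ^ 2 := by
  have hp0le : p₀ ≤ (0:ℝ) := hp₀.le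
  have hsU : UniqueDiffOn ℝ (Icc p₀ (0:ℝ)) := uniqueDiffOn_Icc hp₀
  have hlam2 : (lam:ℝ) ^ 2 ≠ 0 := by positivity
  have hf' : ContDiffOn ℝ 1 (dI p₀ f) (Icc p₀ 0) :=
    hf.derivWithin hsU (by norm_num)
  have hh' : ContDiffOn ℝ 1 (dI p₀ h) (Icc p₀ 0) :=
    hh.derivWithin hsU (by norm_num)
  set F : ℝ → ℝ := fun q => a q ^ 3 * dI p₀ f q with hFdef
  set H : ℝ → ℝ := fun q => a q ^ 3 * dI p₀ h q with hHdef
  have hFc : ContDiffOn ℝ 1 F (Icc p₀ 0) := (ha.pow 3).mul hf'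
  have hHc : ContDiffOn ℝ 1 H (Icc p₀ 0) := (ha.pow 3).mul hh'
  set W : ℝ → ℝ := fun p => f p * H p - h p * F p with hWdef
  have hWc : ContinuousOn W (Icc p₀ 0) :=
    ((hf.continuousOn.mul hHc.continuousOn).sub
      (hh.continuousOn.mul hFc.continuousOn))
  have key : ∀ p ∈ Ioo p₀ (0:ℝ), HasDerivAt W (a p * f p ^ 2 / lam ^ 2) p := by
    intro p hp
    have hps : p ∈ Icc p₀ (0:ℝ) := Ioo_subset_Icc_self hp
    have hnb : Icc p₀ (0:ℝ) ∈ nhds p := Icc_mem_nhds hp.1 hp.2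
    have hfd : HasDerivAt f (dI p₀ f p) p :=
      (((hf.differentiableOn (by norm_num)) p hps).hasDerivWithinAt).hasDerivAt hnb
    have hhd : HasDerivAt h (dI p₀ h p) p :=
      (((hh.differentiableOn (by norm_num)) p hps).hasDerivWithinAt).hasDerivAt hnb
    have hFd : HasDerivAt F (dI p₀ F p) p :=
      (((hFc.differentiableOn (by norm_num)) p hps).hasDerivWithinAt).hasDerivAt hnb
    have hHd : HasDerivAt H (dI p₀ H p) p :=
      (((hHc.differentiableOn (by norm_num)) p hps).hasDerivWithinAt).hasDerivAt hnb
    have hWd : HasDerivAt W _ p := (hfd.mul hHd).sub (hhd.mul hFd)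
    have eF : dI p₀ F p = μ * a p * f p / lam ^ 2 := by
      have := hfe p hps
      field_simp at this ⊢
      linarith
    have eH : dI p₀ H p = (μ * a p * h p + a p * f p) / lam ^ 2 := by
      have := hhe p hps
      field_simp at this ⊢
      linarith
    convert hWd using 1
    rw [eF, eH]
    simp only [hFdef, hHdef]
    field_simp
    ring
  have hint : IntervalIntegrable (fun p => a p * f p ^ 2 / lam ^ 2)
      MeasureTheory.volume p₀ 0 := by
    apply ContinuousOn.intervalIntegrable
    rw [uIcc_of_le hp0le]
    exact (ha.continuousOn.mul ((hf.continuousOn).pow 2)).div_const _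
  have hftc : ∫ p in p₀..(0:ℝ), a p * f p ^ 2 / lam ^ 2 = W 0 - W p₀ :=
    intervalIntegral.integral_eq_sub_of_hasDeriv_right_of_le hp0le hWc
      (fun x hx => (key x hx).hasDerivWithinAt) hint
  have hWp0 : W p₀ = 0 := by
    simp [hWdef, hHdef, hh0, hh'0]
  have : (1 / lam ^ 2) * ∫ p in p₀..(0:ℝ), a p * f p ^ 2 = W 0 := by
    rw [hWp0, sub_zero] at hftc
    rw [← hftc]
    rw [intervalIntegral.integral_div]
    ring
  rw [this]
  simp only [hWdef, hHdef, hFdef]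
  ring
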